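/- arXiv:1101.3453 — 4 statements merged into one kernel-verified Lean document; each statement's English description precedes it below -/
import Mathlib

section
/- Shannon entropy is a join semivaluation on the lattice of partitions of a finite probability space: for all partitions X, Y, H(X ⊔ Y) ≤ H(X) + H(Y) − H(X ⊓ Y), where ⊔ is the common refinement and ⊓ is the coarsest common coarsening, and moreover X ⊑ Y implies H(X) ≤ H(Y). -/
open Finset

variable {σ : Type*} [Fintype σ] [DecidableEq σ]

/-- A probability distribution on a finite type. -/
def IsDist (μ : σ → ℝ) : Prop := (∀ x, 0 ≤ μ x) ∧ ∑ x, μ x = 1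

/-- `Refines X Y` : `X ⊑ Y`, i.e. every block of `Y` is contained in some block of `X`. -/
def Refines (X Y : Finpartition (univ : Finset σ)) : Prop :=
  ∀ B ∈ Y.parts, ∃ C ∈ X.parts, B ⊆ C

/-- The common refinement (the paper's join `X ⊔ Y`). -/
def pJoin (X Y : Finpartition (univ : Finset σ)) : Finpartition (univ : Finset σ) := X ⊓ Y

/-- The setoid associated to a finpartition. -/
def toSetoid (X : Finpartition (univ : Finset σ)) : Setoid σ where
  r x y := ∃ B ∈ X.parts, x ∈ B ∧ y ∈ B
  iseqv := by
    constructor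
    · intro x
      obtain ⟨B, hB, hx⟩ := X.exists_mem (mem_univ x)
      exact ⟨B, hB, hx, hx⟩
    · rintro x y ⟨B, hB, hx, hy⟩; exact ⟨B, hB, hy, hx⟩
    · rintro x y z ⟨B, hB, hx, hy⟩ ⟨C, hC, hy', hz⟩
      exact ⟨B, hB, hx, X.eq_of_mem_parts hC hB hy' hy ▸ hz⟩

/-- The coarsest common coarsening (the paper's meet `X ⊓ Y`). -/
noncomputable def pMeet (X Y : Finpartition (univ : Finset σ)) : Finpartition (univ : Finset σ) :=
  letI : DecidableRel (toSetoid X ⊔ toSetoid Y).r := Classical.decRel _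
  Finpartition.ofSetoid (toSetoid X ⊔ toSetoid Y)

/-- Sum of the `n` largest `μ`-probabilities among the elements of `B`. -/
def gGuess (μ : σ → ℝ) (n : ℕ) (B : Finset σ) : ℝ :=
  (B.powerset.filter fun S => S.card ≤ n).sup' ⟨∅, by simp⟩ fun S => ∑ x ∈ S, μ x

/-- Expected probability of guessing in `n` tries given partition `X`. -/
def GGuess (μ : σ → ℝ) (n : ℕ) (X : Finpartition (univ : Finset σ)) : ℝ :=
  ∑ B ∈ X.parts, gGuess μ n B

/-- Expected number of guesses for a block `B` (elements asked in order of
decreasing probability, i.e. the ordering minimising the expected rank). -/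
noncomputable def NGset (μ : σ → ℝ) (B : Finset σ) : ℝ :=
  ⨅ e : B ≃ Fin B.card, ∑ x ∈ B.attach, ((e x : ℕ) + 1 : ℝ) * μ x

/-- Expected number of guesses given a partition. -/
noncomputable def NGpart (μ : σ → ℝ) (X : Finpartition (univ : Finset σ)) : ℝ :=
  ∑ B ∈ X.parts, NGset μ B

/-- Shannon entropy (base 2) of the block distribution induced by `μ` on `X`. -/
noncomputable def entropy (μ : σ → ℝ) (X : Finpartition (univ : Finset σ)) : ℝ :=
  - ∑ B ∈ X.parts, (∑ x ∈ B, μ x) * Real.logb 2 (∑ x ∈ B, μ x)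

/-- Conditional entropy `H(X|Y) = H(X ⊔ Y) - H(Y)`. -/
noncomputable def condEntropy (μ : σ → ℝ) (X Y : Finpartition (univ : Finset σ)) : ℝ :=
  entropy μ (pJoin X Y) - entropy μ Y

/-- Mutual information `I(X;Y) = H(X) + H(Y) - H(X ⊔ Y)`. -/
noncomputable def mutualInfo (μ : σ → ℝ) (X Y : Finpartition (univ : Finset σ)) : ℝ :=
  entropy μ X + entropy μ Y - entropy μ (pJoin X Y)

/-- Maximum probability in a block. -/
noncomputable def fmax (μ : σ → ℝ) (B : Finset σ) : ℝ := WithBot.unbotD 0 ((B.image μ).max)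

/-- Min-entropy leakage of a partition. -/
noncomputable def MEleak (μ : σ → ℝ) (X : Finpartition (univ : Finset σ)) : ℝ :=
  Real.logb 2 (∑ B ∈ X.parts, fmax μ B) - Real.logb 2 (fmax μ (univ : Finset σ))

/-- Kernel partition of a function on a finite type. -/
def kerP {O : Type*} [DecidableEq O] (f : σ → O) : Finpartition (univ : Finset σ) :=
  letI : DecidableRel (Setoid.ker f).r := fun a b => decEq (f a) (f b)
  Finpartition.ofSetoid (Setoid.ker f)


section Aux

variable {σ : Type*} [Fintype σ] [DecidableEq σ]

private lemma part_unique' {P : Finpartition (univ : Finset σ)} {B C C' : Finset σ}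
    (hB : B.Nonempty) (hC : C ∈ P.parts) (hC' : C' ∈ P.parts) (h1 : B ⊆ C) (h2 : B ⊆ C') :
    C = C' := by
  obtain ⟨x, hx⟩ := hB
  exact P.eq_of_mem_parts hC hC' (h1 hx) (h2 hx)

private lemma sum_fiber' {ι κ : Type*} [DecidableEq ι] [DecidableEq κ]
    (s : Finset ι) (t : Finset κ) (R : ι → κ → Prop) [∀ i k, Decidable (R i k)]
    (hex : ∀ i ∈ s, ∃ k ∈ t, R i k)
    (huniq : ∀ i ∈ s, ∀ k ∈ t, ∀ k' ∈ t, R i k → R i k' → k = k')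
    (f : ι → ℝ) :
    ∑ i ∈ s, f i = ∑ k ∈ t, ∑ i ∈ s.filter (fun i => R i k), f i := by
  have hdisj : (t : Set κ).PairwiseDisjoint (fun k => s.filter fun i => R i k) := by
    intro k hk k' hk' hne
    apply Finset.disjoint_left.mpr
    intro i hik hik'
    simp only [Finset.mem_filter] at hik hik'
    exact hne (huniq i hik.1 k hk k' hk' hik.2 hik'.2)
  rw [← Finset.sum_biUnion hdisj]
  apply Finset.sum_congr _ (fun _ _ => rfl)
  ext i
  simp only [Finset.mem_biUnion, Finset.mem_filter]
  constructor
  · intro hi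
    obtain ⟨k, hk, hR⟩ := hex i hi
    exact ⟨k, hk, hi, hR⟩
  · rintro ⟨k, _, hi, _⟩
    exact hi

/-- For any finpartition `P` and any finset `A`, summing `μ` over `A ∩ B` for `B` a part
gives the sum over `A`. -/
private lemma sum_inter' (P : Finpartition (univ : Finset σ)) (A : Finset σ) (μ : σ → ℝ) :
    ∑ B ∈ P.parts, ∑ x ∈ A ∩ B, μ x = ∑ x ∈ A, μ x := by
  have hdisj : (P.parts : Set (Finset σ)).PairwiseDisjoint (fun B => A ∩ B) := by
    intro B hB B' hB' hne
    exact (P.disjoint hB hB' hne).mono inter_subset_right inter_subset_right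
  rw [← Finset.sum_biUnion hdisj]
  apply Finset.sum_congr _ (fun _ _ => rfl)
  ext x
  simp only [Finset.mem_biUnion, Finset.mem_inter]
  constructor
  · rintro ⟨B, _, hx, _⟩
    exact hx
  · intro hx
    obtain ⟨B, hB, hxB⟩ := P.exists_mem (mem_univ x)
    exact ⟨B, hB, hx, hxB⟩

/-- The parts of a partition of `univ` have total mass `∑ x, μ x`. -/
private lemma sum_parts_pr (P : Finpartition (univ : Finset σ)) (μ : σ → ℝ) :
    ∑ B ∈ P.parts, ∑ x ∈ B, μ x = ∑ x, μ x := by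
  have := sum_inter' P univ μ
  simpa using this

private lemma refines_trans {X Y W : Finpartition (univ : Finset σ)}
    (h1 : Refines X Y) (h2 : Refines Y W) : Refines X W := by
  intro B hB
  obtain ⟨C, hC, hBC⟩ := h2 B hB
  obtain ⟨D, hD, hCD⟩ := h1 C hC
  exact ⟨D, hD, hBC.trans hCD⟩

/-- If `Refines X Y` then the mass of each part `C` of `X` is the sum of the masses of
the parts of `Y` contained in `C`. -/
private lemma pr_part_eq {X Y : Finpartition (univ : Finset σ)} (h : Refines X Y)
    {C : Finset σ} (hC : C ∈ X.parts) (μ : σ → ℝ) :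
    ∑ x ∈ C, μ x = ∑ B ∈ Y.parts.filter (· ⊆ C), ∑ x ∈ B, μ x := by
  have hdisj : ((Y.parts.filter (· ⊆ C)) : Set (Finset σ)).PairwiseDisjoint
      (fun B : Finset σ => B) := by
    intro B hB B' hB' hne
    simp only [Finset.coe_filter, Set.mem_setOf_eq] at hB hB'
    exact Y.disjoint hB.1 hB'.1 hne
  have hbiU : (Y.parts.filter (· ⊆ C)).biUnion (fun B => B) = C := by
    ext x
    simp only [Finset.mem_biUnion, Finset.mem_filter]
    constructor
    · rintro ⟨B, ⟨_, hBC⟩, hxB⟩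
      exact hBC hxB
    · intro hx
      obtain ⟨B, hB, hxB⟩ := Y.exists_mem (mem_univ x)
      obtain ⟨C', hC', hBC'⟩ := h B hB
      have : C' = C := X.eq_of_mem_parts hC' hC (hBC' hxB) hx
      exact ⟨B, ⟨hB, this ▸ hBC'⟩, hxB⟩
  calc ∑ x ∈ C, μ x = ∑ x ∈ (Y.parts.filter (· ⊆ C)).biUnion (fun B => B), μ x := by
        rw [hbiU]
    _ = ∑ B ∈ Y.parts.filter (· ⊆ C), ∑ x ∈ B, μ x := Finset.sum_biUnion hdisj

private lemma gibbs' {a q : ℝ} (ha : 0 ≤ a) (hq : 0 ≤ q) (himp : a ≠ 0 → q ≠ 0) :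
    a * Real.logb 2 q - a * Real.logb 2 a ≤ (q - a) / Real.log 2 := by
  have hlog2 : 0 < Real.log 2 := Real.log_pos one_lt_two
  rcases eq_or_lt_of_le ha with h0 | h0
  · rw [← h0]
    simp only [zero_mul, sub_zero, sub_self]
    positivity
  · have hq' : 0 < q := lt_of_le_of_ne hq (Ne.symm (himp (ne_of_gt h0)))
    have hqa : 0 < q / a := div_pos hq' h0
    have hlog := Real.log_le_sub_one_of_pos hqa
    rw [Real.log_div hq'.ne' h0.ne'] at hlog
    have key : a * (Real.log q - Real.log a) ≤ q - a := by
      have := mul_le_mul_of_nonneg_left hlog (le_of_lt h0)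
      calc a * (Real.log q - Real.log a) ≤ a * (q / a - 1) := this
        _ = q - a := by field_simp
    have : a * Real.logb 2 q - a * Real.logb 2 a
        = a * (Real.log q - Real.log a) / Real.log 2 := by
      unfold Real.logb
      field_simp
    rw [this]
    exact (div_le_div_iff_of_pos_right hlog2).mpr key

/-- Monotonicity of entropy under refinement. -/
private lemma entropy_mono (μ : σ → ℝ) (hμ : IsDist μ) {X Y : Finpartition (univ : Finset σ)}
    (h : Refines X Y) : entropy μ X ≤ entropy μ Y := by
  unfold entropy
  rw [neg_le_neg_iff]
  have hfib : ∀ (f : Finset σ → ℝ),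
      ∑ B ∈ Y.parts, f B = ∑ C ∈ X.parts, ∑ B ∈ Y.parts.filter (· ⊆ C), f B := by
    intro f
    apply sum_fiber'
    · exact h
    · intro B hB C hC C' hC' h1 h2
      exact part_unique' (Y.nonempty_of_mem_parts hB) hC hC' h1 h2
  rw [hfib]
  apply Finset.sum_le_sum
  intro C hC
  calc ∑ B ∈ Y.parts.filter (· ⊆ C), (∑ x ∈ B, μ x) * Real.logb 2 (∑ x ∈ B, μ x)
      ≤ ∑ B ∈ Y.parts.filter (· ⊆ C), (∑ x ∈ B, μ x) * Real.logb 2 (∑ x ∈ C, μ x) := by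
        apply Finset.sum_le_sum
        intro B hB
        simp only [Finset.mem_filter] at hB
        rcases eq_or_lt_of_le (Finset.sum_nonneg fun x _ => hμ.1 x : 0 ≤ ∑ x ∈ B, μ x) with
          h0 | h0
        · rw [← h0, zero_mul, zero_mul]
        · apply mul_le_mul_of_nonneg_left _ (le_of_lt h0)
          apply Real.logb_le_logb_of_le one_lt_two h0
          exact Finset.sum_le_sum_of_subset_of_nonneg hB.2 (fun x _ _ => hμ.1 x)
    _ = (∑ x ∈ C, μ x) * Real.logb 2 (∑ x ∈ C, μ x) := by
        rw [← Finset.sum_mul, ← pr_part_eq h hC μ]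

end Aux

theorem entropy_is_join_semivaluation (μ : σ → ℝ) (hμ : IsDist μ)
    (X Y : Finpartition (univ : Finset σ)) :
    entropy μ (pJoin X Y) ≤ entropy μ X + entropy μ Y - entropy μ (pMeet X Y) ∧
    (Refines X Y → entropy μ X ≤ entropy μ Y) := by
  obtain ⟨hμ0, hμ1⟩ := hμ
  refine ⟨?_, entropy_mono μ ⟨hμ0, hμ1⟩⟩
  classical
  set Z := pMeet X Y with hZdef
  -- refinement facts
  have hXJ : Refines X (pJoin X Y) := by
    intro D hD
    rw [pJoin, Finpartition.parts_inf] at hD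
    simp only [Finset.mem_erase, Finset.mem_image, Finset.mem_product, Finset.inf_eq_inter,
      Finset.bot_eq_empty] at hD
    obtain ⟨_, ⟨p, ⟨hA, _⟩, hAB⟩⟩ := hD
    exact ⟨p.1, hA, hAB ▸ Finset.inter_subset_left⟩
  have hmemZ : ∀ x y : σ, y ∈ Z.part x ↔ (toSetoid X ⊔ toSetoid Y).r x y := by
    intro x y
    rw [hZdef]
    unfold pMeet
    exact Finpartition.mem_part_ofSetoid_iff_rel
  have hZX : Refines Z X := by
    intro A hA
    obtain ⟨x, hx⟩ := X.nonempty_of_mem_parts hA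
    refine ⟨Z.part x, Z.part_mem.mpr (mem_univ x), fun y hy => ?_⟩
    exact (hmemZ x y).mpr (Setoid.le_def.mp le_sup_left ⟨A, hA, hx, hy⟩)
  have hZY : Refines Z Y := by
    intro B hB
    obtain ⟨x, hx⟩ := Y.nonempty_of_mem_parts hB
    refine ⟨Z.part x, Z.part_mem.mpr (mem_univ x), fun y hy => ?_⟩
    exact (hmemZ x y).mpr (Setoid.le_def.mp le_sup_right ⟨B, hB, hx, hy⟩)
  have hZJ : Refines Z (pJoin X Y) := refines_trans hZX hXJ
  -- index set of pairs
  set T : Finset (Finset σ × Finset σ) :=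
    (X.parts ×ˢ Y.parts).filter (fun p => (p.1 ∩ p.2).Nonempty) with hT
  set a : Finset σ × Finset σ → ℝ := fun p => ∑ x ∈ p.1 ∩ p.2, μ x with ha
  have ha0 : ∀ p, 0 ≤ a p := fun p => Finset.sum_nonneg fun x _ => hμ0 x
  have hJparts : (pJoin X Y).parts = T.image (fun p => p.1 ∩ p.2) := by
    rw [pJoin, Finpartition.parts_inf, hT]
    ext D
    simp only [Finset.mem_erase, Finset.mem_image, Finset.mem_filter, Finset.mem_product,
      Finset.inf_eq_inter, Finset.bot_eq_empty]
    constructor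
    · rintro ⟨hne, ⟨p, hp, rfl⟩⟩
      exact ⟨p, ⟨hp, Finset.nonempty_iff_ne_empty.mpr hne⟩, rfl⟩
    · rintro ⟨p, ⟨hp, hpne⟩, rfl⟩
      exact ⟨Finset.nonempty_iff_ne_empty.mp hpne, p, hp, rfl⟩
  have hinj : ∀ p ∈ T, ∀ r ∈ T, p.1 ∩ p.2 = r.1 ∩ r.2 → p = r := by
    intro p hp r hr hpr
    rw [hT, Finset.mem_filter, Finset.mem_product] at hp hr
    obtain ⟨x, hx⟩ := hp.2
    have hx' : x ∈ r.1 ∩ r.2 := hpr ▸ hx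
    rw [Finset.mem_inter] at hx hx'
    exact Prod.ext (X.eq_of_mem_parts hp.1.1 hr.1.1 hx.1 hx'.1)
      (Y.eq_of_mem_parts hp.1.2 hr.1.2 hx.2 hx'.2)
  have hHJ : entropy μ (pJoin X Y) = - ∑ p ∈ T, a p * Real.logb 2 (a p) := by
    unfold entropy
    rw [hJparts, Finset.sum_image hinj]
  have hsuma : ∑ p ∈ T, a p = 1 := by
    have h := sum_parts_pr (pJoin X Y) μ
    rw [hJparts, Finset.sum_image hinj, hμ1] at h
    exact h
  -- the function selecting the meet-part containing a given pair's intersection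
  set c : Finset σ × Finset σ → Finset σ := fun p =>
    if h : (p.1 ∩ p.2).Nonempty then Z.part h.choose else ∅ with hc
  have hneT : ∀ p ∈ T, (p.1 ∩ p.2).Nonempty := by
    intro p hp
    rw [hT, Finset.mem_filter] at hp
    exact hp.2
  have hc_eq : ∀ p ∈ T, ∀ C ∈ Z.parts, p.1 ∩ p.2 ⊆ C → c p = C := by
    intro p hp C hC hsub
    have hne := hneT p hp
    rw [hc]
    simp only [dif_pos hne]
    exact Z.eq_of_mem_parts (Z.part_mem.mpr (mem_univ _)) hC (Z.mem_part (mem_univ _))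
      (hsub hne.choose_spec)
  have hc_mem : ∀ p ∈ T, c p ∈ Z.parts := by
    intro p hp
    have hne := hneT p hp
    rw [hc]
    simp only [dif_pos hne]
    exact Z.part_mem.mpr (mem_univ _)
  have hc_sub : ∀ p ∈ T, p.1 ∩ p.2 ⊆ c p := by
    intro p hp
    obtain ⟨C, hC, hsub⟩ := hZJ (p.1 ∩ p.2)
      (by rw [hJparts]; exact Finset.mem_image_of_mem _ hp)
    rw [hc_eq p hp C hC hsub]
    exact hsub
  have hc1 : ∀ p ∈ T, p.1 ⊆ c p := by
    intro p hp
    have hp' := hp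
    rw [hT, Finset.mem_filter, Finset.mem_product] at hp'
    obtain ⟨C, hC, hsub⟩ := hZX p.1 hp'.1.1
    rw [hc_eq p hp C hC (Finset.inter_subset_left.trans hsub)]
    exact hsub
  have hc2 : ∀ p ∈ T, p.2 ⊆ c p := by
    intro p hp
    have hp' := hp
    rw [hT, Finset.mem_filter, Finset.mem_product] at hp'
    obtain ⟨C, hC, hsub⟩ := hZY p.2 hp'.1.2
    rw [hc_eq p hp C hC (Finset.inter_subset_right.trans hsub)]
    exact hsub
  set q : Finset σ × Finset σ → ℝ := fun p =>
    (∑ x ∈ p.1, μ x) * (∑ x ∈ p.2, μ x) / (∑ x ∈ c p, μ x) with hqd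
  have hq0 : ∀ p, 0 ≤ q p := by
    intro p
    simp only [hqd]
    exact div_nonneg (mul_nonneg (Finset.sum_nonneg fun x _ => hμ0 x)
      (Finset.sum_nonneg fun x _ => hμ0 x)) (Finset.sum_nonneg fun x _ => hμ0 x)
  -- (s1)
  have hs1 : ∑ p ∈ T, a p * Real.logb 2 (∑ x ∈ p.1, μ x)
      = ∑ A ∈ X.parts, (∑ x ∈ A, μ x) * Real.logb 2 (∑ x ∈ A, μ x) := by
    simp only [hT, ha]
    rw [Finset.sum_filter_of_ne (by
      intro p hp hne
      by_contra hcon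
      rw [Finset.not_nonempty_iff_eq_empty] at hcon
      apply hne
      simp [hcon])]
    rw [Finset.sum_product]
    apply Finset.sum_congr rfl
    intro A hA
    dsimp only
    rw [← Finset.sum_mul, sum_inter' Y A μ]
  -- (s2)
  have hs2 : ∑ p ∈ T, a p * Real.logb 2 (∑ x ∈ p.2, μ x)
      = ∑ B ∈ Y.parts, (∑ x ∈ B, μ x) * Real.logb 2 (∑ x ∈ B, μ x) := by
    simp only [hT, ha]
    rw [Finset.sum_filter_of_ne (by
      intro p hp hne
      by_contra hcon
      rw [Finset.not_nonempty_iff_eq_empty] at hcon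
      apply hne
      simp [hcon])]
    rw [Finset.sum_product_right]
    apply Finset.sum_congr rfl
    intro B hB
    dsimp only
    rw [← Finset.sum_mul]
    congr 1
    rw [← sum_inter' X B μ]
    exact Finset.sum_congr rfl fun A _ => by rw [Finset.inter_comm]
  -- fibering over the parts of Z
  have hfibT : ∀ f : Finset σ × Finset σ → ℝ,
      ∑ p ∈ T, f p = ∑ C ∈ Z.parts, ∑ p ∈ T.filter (fun p => c p = C), f p := by
    intro f
    apply sum_fiber'
    · exact fun p hp => ⟨c p, hc_mem p hp, rfl⟩
    · rintro p _ C _ C' _ rfl rfl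
      rfl
  have hfibmass : ∀ C ∈ Z.parts, ∑ p ∈ T.filter (fun p => c p = C), a p = ∑ x ∈ C, μ x := by
    intro C hC
    rw [pr_part_eq hZJ hC μ]
    have himg : (pJoin X Y).parts.filter (· ⊆ C)
        = (T.filter (fun p => c p = C)).image (fun p => p.1 ∩ p.2) := by
      rw [hJparts]
      ext D
      simp only [Finset.mem_filter, Finset.mem_image]
      constructor
      · rintro ⟨⟨p, hp, rfl⟩, hsub⟩
        exact ⟨p, ⟨hp, hc_eq p hp C hC hsub⟩, rfl⟩
      · rintro ⟨p, ⟨hp, hcp⟩, rfl⟩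
        exact ⟨⟨p, hp, rfl⟩, hcp ▸ hc_sub p hp⟩
    rw [himg, Finset.sum_image (fun p hp r hr hpr =>
      hinj p (Finset.mem_of_mem_filter p hp) r (Finset.mem_of_mem_filter r hr) hpr)]
  -- (s3)
  have hs3 : ∑ p ∈ T, a p * Real.logb 2 (∑ x ∈ c p, μ x)
      = ∑ C ∈ Z.parts, (∑ x ∈ C, μ x) * Real.logb 2 (∑ x ∈ C, μ x) := by
    rw [hfibT]
    apply Finset.sum_congr rfl
    intro C hC
    calc ∑ p ∈ T.filter (fun p => c p = C), a p * Real.logb 2 (∑ x ∈ c p, μ x)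
        = ∑ p ∈ T.filter (fun p => c p = C), a p * Real.logb 2 (∑ x ∈ C, μ x) := by
          apply Finset.sum_congr rfl
          intro p hp
          rw [(Finset.mem_filter.mp hp).2]
      _ = (∑ x ∈ C, μ x) * Real.logb 2 (∑ x ∈ C, μ x) := by
          rw [← Finset.sum_mul, hfibmass C hC]
  -- (s4)
  have hsumq : ∑ p ∈ T, q p ≤ 1 := by
    rw [hfibT q]
    have hbound : ∀ C ∈ Z.parts,
        ∑ p ∈ T.filter (fun p => c p = C), q p ≤ ∑ x ∈ C, μ x := by
      intro C hC
      have hCnn : 0 ≤ ∑ x ∈ C, μ x := Finset.sum_nonneg fun x _ => hμ0 x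
      have hsub : T.filter (fun p => c p = C)
          ⊆ (X.parts.filter (· ⊆ C)) ×ˢ (Y.parts.filter (· ⊆ C)) := by
        intro p hp
        have hpT := Finset.mem_of_mem_filter p hp
        have hcp := (Finset.mem_filter.mp hp).2
        have hp' := hpT
        rw [hT, Finset.mem_filter, Finset.mem_product] at hp'
        rw [Finset.mem_product, Finset.mem_filter, Finset.mem_filter]
        exact ⟨⟨hp'.1.1, hcp ▸ hc1 p hpT⟩, ⟨hp'.1.2, hcp ▸ hc2 p hpT⟩⟩
      calc ∑ p ∈ T.filter (fun p => c p = C), q p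
          = ∑ p ∈ T.filter (fun p => c p = C),
              (∑ x ∈ p.1, μ x) * (∑ x ∈ p.2, μ x) / (∑ x ∈ C, μ x) := by
            apply Finset.sum_congr rfl
            intro p hp
            simp only [hqd]
            rw [(Finset.mem_filter.mp hp).2]
        _ ≤ ∑ p ∈ (X.parts.filter (· ⊆ C)) ×ˢ (Y.parts.filter (· ⊆ C)),
              (∑ x ∈ p.1, μ x) * (∑ x ∈ p.2, μ x) / (∑ x ∈ C, μ x) := by
            apply Finset.sum_le_sum_of_subset_of_nonneg hsub
            intro p _ _
            exact div_nonneg (mul_nonneg (Finset.sum_nonneg fun x _ => hμ0 x)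
              (Finset.sum_nonneg fun x _ => hμ0 x)) hCnn
        _ = (∑ x ∈ C, μ x) * (∑ x ∈ C, μ x) / (∑ x ∈ C, μ x) := by
            have e1 : ∑ p ∈ (X.parts.filter (· ⊆ C)) ×ˢ (Y.parts.filter (· ⊆ C)),
                  (∑ x ∈ p.1, μ x) * (∑ x ∈ p.2, μ x) / (∑ x ∈ C, μ x)
                = (∑ A ∈ X.parts.filter (· ⊆ C), ∑ x ∈ A, μ x)
                  * (∑ B ∈ Y.parts.filter (· ⊆ C), ∑ x ∈ B, μ x) / (∑ x ∈ C, μ x) := by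
              rw [Finset.sum_product, Finset.sum_mul_sum, Finset.sum_div]
              exact Finset.sum_congr rfl fun A _ => by rw [Finset.sum_div]
            rw [e1, ← pr_part_eq hZX hC μ, ← pr_part_eq hZY hC μ]
        _ ≤ ∑ x ∈ C, μ x := by
            rcases eq_or_lt_of_le hCnn with h0 | h0
            · rw [← h0]
              simp
            · rw [mul_div_assoc, div_self h0.ne', mul_one]
    calc ∑ C ∈ Z.parts, ∑ p ∈ T.filter (fun p => c p = C), q p
        ≤ ∑ C ∈ Z.parts, ∑ x ∈ C, μ x := Finset.sum_le_sum hbound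
      _ = 1 := by rw [sum_parts_pr Z μ, hμ1]
  -- Gibbs inequality termwise
  have hgibbs : ∀ p ∈ T, a p * Real.logb 2 (q p) - a p * Real.logb 2 (a p)
      ≤ (q p - a p) / Real.log 2 := by
    intro p hp
    apply gibbs' (ha0 p) (hq0 p)
    intro hane
    have hapos : 0 < a p := lt_of_le_of_ne (ha0 p) (Ne.symm hane)
    have h1 : 0 < ∑ x ∈ p.1, μ x :=
      lt_of_lt_of_le hapos (Finset.sum_le_sum_of_subset_of_nonneg
        Finset.inter_subset_left fun x _ _ => hμ0 x)
    have h2 : 0 < ∑ x ∈ p.2, μ x :=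
      lt_of_lt_of_le hapos (Finset.sum_le_sum_of_subset_of_nonneg
        Finset.inter_subset_right fun x _ _ => hμ0 x)
    have h3 : 0 < ∑ x ∈ c p, μ x :=
      lt_of_lt_of_le hapos (Finset.sum_le_sum_of_subset_of_nonneg
        (hc_sub p hp) fun x _ _ => hμ0 x)
    simp only [hqd]
    exact ne_of_gt (div_pos (mul_pos h1 h2) h3)
  have hsplit : ∀ p ∈ T, a p * Real.logb 2 (q p)
      = a p * Real.logb 2 (∑ x ∈ p.1, μ x) + a p * Real.logb 2 (∑ x ∈ p.2, μ x)
        - a p * Real.logb 2 (∑ x ∈ c p, μ x) := by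
    intro p hp
    rcases eq_or_lt_of_le (ha0 p) with h0 | h0
    · rw [← h0]
      ring
    · have h1 : 0 < ∑ x ∈ p.1, μ x :=
        lt_of_lt_of_le h0 (Finset.sum_le_sum_of_subset_of_nonneg
          Finset.inter_subset_left fun x _ _ => hμ0 x)
      have h2 : 0 < ∑ x ∈ p.2, μ x :=
        lt_of_lt_of_le h0 (Finset.sum_le_sum_of_subset_of_nonneg
          Finset.inter_subset_right fun x _ _ => hμ0 x)
      have h3 : 0 < ∑ x ∈ c p, μ x :=
        lt_of_lt_of_le h0 (Finset.sum_le_sum_of_subset_of_nonneg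
          (hc_sub p hp) fun x _ _ => hμ0 x)
      simp only [hqd]
      rw [Real.logb_div (mul_pos h1 h2).ne' h3.ne', Real.logb_mul h1.ne' h2.ne']
      ring
  have hmain : ∑ p ∈ T, (a p * Real.logb 2 (q p) - a p * Real.logb 2 (a p)) ≤ 0 := by
    calc ∑ p ∈ T, (a p * Real.logb 2 (q p) - a p * Real.logb 2 (a p))
        ≤ ∑ p ∈ T, (q p - a p) / Real.log 2 := Finset.sum_le_sum hgibbs
      _ = (∑ p ∈ T, q p - ∑ p ∈ T, a p) / Real.log 2 := by
          rw [← Finset.sum_div, Finset.sum_sub_distrib]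
      _ ≤ 0 := by
          apply div_nonpos_of_nonpos_of_nonneg
          · rw [hsuma]
            linarith
          · exact (Real.log_pos one_lt_two).le
  have hexp : ∑ p ∈ T, (a p * Real.logb 2 (q p) - a p * Real.logb 2 (a p))
      = (∑ A ∈ X.parts, (∑ x ∈ A, μ x) * Real.logb 2 (∑ x ∈ A, μ x))
      + (∑ B ∈ Y.parts, (∑ x ∈ B, μ x) * Real.logb 2 (∑ x ∈ B, μ x))
      - (∑ C ∈ Z.parts, (∑ x ∈ C, μ x) * Real.logb 2 (∑ x ∈ C, μ x))
      - ∑ p ∈ T, a p * Real.logb 2 (a p) := by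
    rw [Finset.sum_sub_distrib]
    congr 1
    rw [Finset.sum_congr rfl hsplit, Finset.sum_sub_distrib, Finset.sum_add_distrib,
      hs1, hs2, hs3]
  rw [hexp] at hmain
  rw [hHJ]
  unfold entropy
  linarith
end

section
/- For partitions X and Y of a finite probability space, the entropy of their meet is at most the mutual information between them: H(X ⊓ Y) ≤ I(X; Y), where I(X;Y) = H(X) + H(Y) − H(X ⊔ Y). -/
open Finset

variable {σ : Type*} [Fintype σ] [DecidableEq σ]

section MeetAux

variable {σ : Type*} [Fintype σ] [DecidableEq σ]

/-- The `W`-block containing (an arbitrary element of) `D`. -/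
noncomputable def blk (W : Finpartition (univ : Finset σ)) (D : Finset σ) : Finset σ :=
  if h : D.Nonempty then W.part h.choose else ∅

lemma blk_eq {W : Finpartition (univ : Finset σ)} {D : Finset σ} {x : σ}
    (hx : x ∈ D) (hc : ∀ y ∈ D, y ∈ W.part x) : blk W D = W.part x := by
  have h : D.Nonempty := ⟨x, hx⟩
  rw [blk, dif_pos h]
  exact W.eq_of_mem_parts (W.part_mem.mpr (mem_univ _)) (W.part_mem.mpr (mem_univ _))
    (W.mem_part (mem_univ _)) (hc _ h.choose_spec)

lemma sum_parts_eq (W : Finpartition (univ : Finset σ)) (f : σ → ℝ) :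
    ∑ B ∈ W.parts, ∑ x ∈ B, f x = ∑ x, f x := by
  conv_rhs => rw [← W.biUnion_parts]
  rw [Finset.sum_biUnion W.disjoint]
  rfl

lemma entropy_eq (μ : σ → ℝ) (W : Finpartition (univ : Finset σ)) :
    entropy μ W = - ∑ x, μ x * Real.logb 2 (∑ y ∈ W.part x, μ y) := by
  rw [entropy, ← sum_parts_eq W (fun x => μ x * Real.logb 2 (∑ y ∈ W.part x, μ y))]
  congr 1
  refine Finset.sum_congr rfl fun B hB => ?_
  rw [Finset.sum_mul]
  refine Finset.sum_congr rfl fun x hx => ?_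
  rw [W.part_eq_of_mem hB hx]

lemma part_pJoin (X Y : Finpartition (univ : Finset σ)) (x : σ) :
    (pJoin X Y).part x = X.part x ∩ Y.part x := by
  have hx : x ∈ X.part x ∩ Y.part x :=
    mem_inter.mpr ⟨X.mem_part (mem_univ x), Y.mem_part (mem_univ x)⟩
  refine (pJoin X Y).part_eq_of_mem ?_ hx
  show _ ∈ (X ⊓ Y).parts
  rw [Finpartition.parts_inf]
  refine mem_erase.mpr ⟨?_, mem_image.mpr ⟨(X.part x, Y.part x),
    mem_product.mpr ⟨X.part_mem.mpr (mem_univ x), Y.part_mem.mpr (mem_univ x)⟩, rfl⟩⟩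
  rw [Finset.bot_eq_empty]
  exact Finset.ne_empty_of_mem hx

lemma part_subset_pMeet_left (X Y : Finpartition (univ : Finset σ)) (x : σ) :
    X.part x ⊆ (pMeet X Y).part x := by
  intro y hy
  have hr : (toSetoid X ⊔ toSetoid Y).r x y := by
    refine Setoid.le_def.mp le_sup_left ?_
    exact ⟨X.part x, X.part_mem.mpr (mem_univ x), X.mem_part (mem_univ x), hy⟩
  unfold pMeet
  letI : DecidableRel (toSetoid X ⊔ toSetoid Y).r := Classical.decRel _
  exact Finpartition.mem_part_ofSetoid_iff_rel.mpr hr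

lemma part_subset_pMeet_right (X Y : Finpartition (univ : Finset σ)) (x : σ) :
    Y.part x ⊆ (pMeet X Y).part x := by
  intro y hy
  have hr : (toSetoid X ⊔ toSetoid Y).r x y := by
    refine Setoid.le_def.mp le_sup_right ?_
    exact ⟨Y.part x, Y.part_mem.mpr (mem_univ x), Y.mem_part (mem_univ x), hy⟩
  unfold pMeet
  letI : DecidableRel (toSetoid X ⊔ toSetoid Y).r := Classical.decRel _
  exact Finpartition.mem_part_ofSetoid_iff_rel.mpr hr

end MeetAux


theorem entropy_meet_le_mutualInfo (μ : σ → ℝ) (hμ : IsDist μ)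
    (X Y : Finpartition (univ : Finset σ)) :
    entropy μ (pMeet X Y) ≤ mutualInfo μ X Y := by
  classical
  obtain ⟨h0, h1⟩ := hμ
  set Z := pMeet X Y with hZdef
  set J := pJoin X Y with hJdef
  have hP0 : ∀ S : Finset σ, (0:ℝ) ≤ ∑ x ∈ S, μ x := fun S => Finset.sum_nonneg fun x _ => h0 x
  have hPmono : ∀ S T : Finset σ, S ⊆ T → ∑ x ∈ S, μ x ≤ ∑ x ∈ T, μ x :=
    fun S T h => Finset.sum_le_sum_of_subset_of_nonneg h fun x _ _ => h0 x
  have hμle : ∀ (x : σ) (W : Finpartition (univ : Finset σ)), μ x ≤ ∑ y ∈ W.part x, μ y :=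
    fun x W => Finset.single_le_sum (fun y _ => h0 y) (W.mem_part (mem_univ x))
  have hJpart : ∀ x : σ, J.part x = X.part x ∩ Y.part x := part_pJoin X Y
  have hXsubZ : ∀ x : σ, X.part x ⊆ Z.part x := part_subset_pMeet_left X Y
  have hYsubZ : ∀ x : σ, Y.part x ⊆ Z.part x := part_subset_pMeet_right X Y
  -- block constancy facts on parts of J
  have hblk : ∀ D ∈ J.parts, ∀ x ∈ D,
      blk X D = X.part x ∧ blk Y D = Y.part x ∧ blk Z D = Z.part x ∧ D = J.part x := by
    intro D hD x hx
    have hDx : D = J.part x := (J.part_eq_of_mem hD hx).symm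
    have hDX : ∀ y ∈ D, y ∈ X.part x := by
      intro y hy
      have : y ∈ X.part x ∩ Y.part x := by rw [← hJpart, ← hDx]; exact hy
      exact (mem_inter.mp this).1
    have hDY : ∀ y ∈ D, y ∈ Y.part x := by
      intro y hy
      have : y ∈ X.part x ∩ Y.part x := by rw [← hJpart, ← hDx]; exact hy
      exact (mem_inter.mp this).2
    exact ⟨blk_eq hx hDX, blk_eq hx hDY, blk_eq hx (fun y hy => hXsubZ x (hDX y hy)), hDx⟩
  have hrec : ∀ D ∈ J.parts, D = blk X D ∩ blk Y D := by
    intro D hD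
    obtain ⟨x, hx⟩ := J.nonempty_of_mem_parts hD
    obtain ⟨e1, e2, _, e4⟩ := hblk D hD x hx
    rw [e1, e2, ← hJpart]
    exact e4
  -- the counting inequality
  have count : ∑ x, μ x * ((∑ y ∈ X.part x, μ y) * (∑ y ∈ Y.part x, μ y) /
      ((∑ y ∈ Z.part x, μ y) * (∑ y ∈ J.part x, μ y))) ≤ 1 := by
    rw [← sum_parts_eq J (fun x => μ x * ((∑ y ∈ X.part x, μ y) * (∑ y ∈ Y.part x, μ y) /
      ((∑ y ∈ Z.part x, μ y) * (∑ y ∈ J.part x, μ y))))]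
    have step1 : ∀ D ∈ J.parts,
        (∑ x ∈ D, μ x * ((∑ y ∈ X.part x, μ y) * (∑ y ∈ Y.part x, μ y) /
          ((∑ y ∈ Z.part x, μ y) * (∑ y ∈ J.part x, μ y))))
        ≤ (∑ y ∈ blk X D, μ y) * (∑ y ∈ blk Y D, μ y) / (∑ y ∈ blk Z D, μ y) := by
      intro D hD
      have hconst : (∑ x ∈ D, μ x * ((∑ y ∈ X.part x, μ y) * (∑ y ∈ Y.part x, μ y) /
            ((∑ y ∈ Z.part x, μ y) * (∑ y ∈ J.part x, μ y))))
          = (∑ x ∈ D, μ x) * ((∑ y ∈ blk X D, μ y) * (∑ y ∈ blk Y D, μ y) /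
            ((∑ y ∈ blk Z D, μ y) * (∑ x ∈ D, μ x))) := by
        rw [Finset.sum_mul]
        refine Finset.sum_congr rfl fun x hx => ?_
        obtain ⟨e1, e2, e3, e4⟩ := hblk D hD x hx
        rw [e1, e2, e3, ← e4]
      rw [hconst]
      rcases eq_or_ne (∑ y ∈ blk Z D, μ y) 0 with hC | hC
      · simp [hC]
      rcases eq_or_ne (∑ x ∈ D, μ x) 0 with hD0 | hD0
      · rw [hD0, zero_mul]
        exact div_nonneg (mul_nonneg (hP0 _) (hP0 _)) (hP0 _)
      · rw [show (∑ x ∈ D, μ x) * ((∑ y ∈ blk X D, μ y) * (∑ y ∈ blk Y D, μ y) /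
            ((∑ y ∈ blk Z D, μ y) * (∑ x ∈ D, μ x)))
            = (∑ y ∈ blk X D, μ y) * (∑ y ∈ blk Y D, μ y) / (∑ y ∈ blk Z D, μ y) from by
          field_simp]
    have maps : ∀ D ∈ J.parts, blk Z D ∈ Z.parts := by
      intro D hD
      obtain ⟨x, hx⟩ := J.nonempty_of_mem_parts hD
      rw [(hblk D hD x hx).2.2.1]
      exact Z.part_mem.mpr (mem_univ x)
    have fiber_bound : ∀ C ∈ Z.parts,
        (∑ D ∈ J.parts with blk Z D = C,
          (∑ y ∈ blk X D, μ y) * (∑ y ∈ blk Y D, μ y) / (∑ y ∈ blk Z D, μ y))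
        ≤ ∑ y ∈ C, μ y := by
      intro C hC
      have hfib : (∑ D ∈ J.parts with blk Z D = C,
            (∑ y ∈ blk X D, μ y) * (∑ y ∈ blk Y D, μ y) / (∑ y ∈ blk Z D, μ y))
          = (∑ D ∈ J.parts with blk Z D = C,
            (∑ y ∈ blk X D, μ y) * (∑ y ∈ blk Y D, μ y)) / (∑ y ∈ C, μ y) := by
        rw [Finset.sum_div]
        refine Finset.sum_congr rfl fun D hD => ?_
        rw [(Finset.mem_filter.mp hD).2]
      rw [hfib]
      have partial_le : ∀ (W : Finpartition (univ : Finset σ)),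
          ∑ A ∈ W.parts with A ⊆ C, ∑ y ∈ A, μ y ≤ ∑ y ∈ C, μ y := by
        intro W
        calc ∑ A ∈ W.parts with A ⊆ C, ∑ y ∈ A, μ y
            = ∑ y ∈ (W.parts.filter (· ⊆ C)).biUnion id, μ y :=
              (Finset.sum_biUnion
                (W.disjoint.subset (Finset.coe_subset.mpr (Finset.filter_subset _ _)))).symm
          _ ≤ ∑ y ∈ C, μ y := hPmono _ _
              (Finset.biUnion_subset.mpr fun A hA => (Finset.mem_filter.mp hA).2)
      have hnum : (∑ D ∈ J.parts with blk Z D = C,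
            (∑ y ∈ blk X D, μ y) * (∑ y ∈ blk Y D, μ y))
          ≤ (∑ y ∈ C, μ y) * (∑ y ∈ C, μ y) := by
        have hinj : ∀ D1 ∈ J.parts.filter (fun D => blk Z D = C),
            ∀ D2 ∈ J.parts.filter (fun D => blk Z D = C),
            (fun D => (blk X D, blk Y D)) D1 = (fun D => (blk X D, blk Y D)) D2 → D1 = D2 := by
          intro D1 hm1 D2 hm2 heq
          simp only [Prod.mk.injEq] at heq
          rw [hrec D1 (Finset.mem_filter.mp hm1).1, hrec D2 (Finset.mem_filter.mp hm2).1,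
            heq.1, heq.2]
        have himg : (J.parts.filter (fun D => blk Z D = C)).image (fun D => (blk X D, blk Y D))
            ⊆ (X.parts.filter (· ⊆ C)) ×ˢ (Y.parts.filter (· ⊆ C)) := by
          intro ab hab
          obtain ⟨D, hD, rfl⟩ := Finset.mem_image.mp hab
          obtain ⟨hDJ, hDC⟩ := Finset.mem_filter.mp hD
          obtain ⟨x, hx⟩ := J.nonempty_of_mem_parts hDJ
          obtain ⟨e1, e2, e3, _⟩ := hblk D hDJ x hx
          refine Finset.mem_product.mpr
            ⟨Finset.mem_filter.mpr ⟨?_, ?_⟩, Finset.mem_filter.mpr ⟨?_, ?_⟩⟩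
          · rw [e1]; exact X.part_mem.mpr (mem_univ x)
          · show blk X D ⊆ C
            rw [e1, ← hDC, e3]; exact hXsubZ x
          · rw [e2]; exact Y.part_mem.mpr (mem_univ x)
          · show blk Y D ⊆ C
            rw [e2, ← hDC, e3]; exact hYsubZ x
        calc (∑ D ∈ J.parts with blk Z D = C,
              (∑ y ∈ blk X D, μ y) * (∑ y ∈ blk Y D, μ y))
            = ∑ ab ∈ (J.parts.filter (fun D => blk Z D = C)).image
                (fun D => (blk X D, blk Y D)), (∑ y ∈ ab.1, μ y) * (∑ y ∈ ab.2, μ y) :=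
              by rw [Finset.sum_image hinj]
          _ ≤ ∑ ab ∈ (X.parts.filter (· ⊆ C)) ×ˢ (Y.parts.filter (· ⊆ C)),
                (∑ y ∈ ab.1, μ y) * (∑ y ∈ ab.2, μ y) :=
              Finset.sum_le_sum_of_subset_of_nonneg himg
                (fun ab _ _ => mul_nonneg (hP0 _) (hP0 _))
          _ = (∑ A ∈ X.parts with A ⊆ C, ∑ y ∈ A, μ y) *
                (∑ B ∈ Y.parts with B ⊆ C, ∑ y ∈ B, μ y) := by
              rw [Finset.sum_product, Finset.sum_mul_sum]
          _ ≤ (∑ y ∈ C, μ y) * (∑ y ∈ C, μ y) :=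
              mul_le_mul (partial_le X) (partial_le Y)
                (Finset.sum_nonneg fun A _ => hP0 A) (hP0 C)
      rcases eq_or_ne (∑ y ∈ C, μ y) 0 with h | h
      · have hge : (0:ℝ) ≤ ∑ D ∈ J.parts with blk Z D = C,
            (∑ y ∈ blk X D, μ y) * (∑ y ∈ blk Y D, μ y) :=
          Finset.sum_nonneg fun D _ => mul_nonneg (hP0 _) (hP0 _)
        have hle : (∑ D ∈ J.parts with blk Z D = C,
            (∑ y ∈ blk X D, μ y) * (∑ y ∈ blk Y D, μ y)) ≤ 0 := by
          simpa [h] using hnum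
        rw [le_antisymm hle hge, h]
        simp
      · rw [div_le_iff₀ (lt_of_le_of_ne (hP0 C) (Ne.symm h))]
        exact hnum
    calc ∑ D ∈ J.parts, (∑ x ∈ D, μ x * ((∑ y ∈ X.part x, μ y) * (∑ y ∈ Y.part x, μ y) /
          ((∑ y ∈ Z.part x, μ y) * (∑ y ∈ J.part x, μ y))))
        ≤ ∑ D ∈ J.parts, (∑ y ∈ blk X D, μ y) * (∑ y ∈ blk Y D, μ y) / (∑ y ∈ blk Z D, μ y) :=
          Finset.sum_le_sum step1
      _ = ∑ C ∈ Z.parts, ∑ D ∈ J.parts with blk Z D = C,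
            (∑ y ∈ blk X D, μ y) * (∑ y ∈ blk Y D, μ y) / (∑ y ∈ blk Z D, μ y) :=
          (Finset.sum_fiberwise_of_maps_to maps _).symm
      _ ≤ ∑ C ∈ Z.parts, ∑ y ∈ C, μ y := Finset.sum_le_sum fiber_bound
      _ = 1 := by rw [sum_parts_eq Z (fun y => μ y)]; exact h1
  -- the pointwise logarithmic bound, summed
  have sumlog : ∑ x, μ x * (Real.logb 2 (∑ y ∈ X.part x, μ y)
        + Real.logb 2 (∑ y ∈ Y.part x, μ y) - Real.logb 2 (∑ y ∈ Z.part x, μ y)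
        - Real.logb 2 (∑ y ∈ J.part x, μ y)) ≤ 0 := by
    have hstep : ∀ x : σ, μ x * (Real.logb 2 (∑ y ∈ X.part x, μ y)
        + Real.logb 2 (∑ y ∈ Y.part x, μ y) - Real.logb 2 (∑ y ∈ Z.part x, μ y)
        - Real.logb 2 (∑ y ∈ J.part x, μ y))
        ≤ μ x * ((∑ y ∈ X.part x, μ y) * (∑ y ∈ Y.part x, μ y) /
          ((∑ y ∈ Z.part x, μ y) * (∑ y ∈ J.part x, μ y)) - 1) / Real.log 2 := by
      intro x
      rcases eq_or_lt_of_le (h0 x) with h | h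
      · rw [← h]; simp
      · have hax : 0 < ∑ y ∈ X.part x, μ y := lt_of_lt_of_le h (hμle x X)
        have hbx : 0 < ∑ y ∈ Y.part x, μ y := lt_of_lt_of_le h (hμle x Y)
        have hcx : 0 < ∑ y ∈ Z.part x, μ y := lt_of_lt_of_le h (hμle x Z)
        have hpx : 0 < ∑ y ∈ J.part x, μ y := lt_of_lt_of_le h (hμle x J)
        have hq : 0 < (∑ y ∈ X.part x, μ y) * (∑ y ∈ Y.part x, μ y) /
            ((∑ y ∈ Z.part x, μ y) * (∑ y ∈ J.part x, μ y)) := by positivity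
        have hlog : Real.logb 2 (∑ y ∈ X.part x, μ y) + Real.logb 2 (∑ y ∈ Y.part x, μ y)
            - Real.logb 2 (∑ y ∈ Z.part x, μ y) - Real.logb 2 (∑ y ∈ J.part x, μ y)
            = Real.logb 2 ((∑ y ∈ X.part x, μ y) * (∑ y ∈ Y.part x, μ y) /
              ((∑ y ∈ Z.part x, μ y) * (∑ y ∈ J.part x, μ y))) := by
          rw [Real.logb_div (by positivity) (by positivity),
            Real.logb_mul hax.ne' hbx.ne', Real.logb_mul hcx.ne' hpx.ne']
          ring
        rw [hlog, Real.logb]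
        refine le_trans (mul_le_mul_of_nonneg_left ?_ h.le)
          (le_of_eq (mul_div_assoc _ _ _).symm)
        gcongr
        exact Real.log_le_sub_one_of_pos hq
    calc ∑ x, μ x * (Real.logb 2 (∑ y ∈ X.part x, μ y)
          + Real.logb 2 (∑ y ∈ Y.part x, μ y) - Real.logb 2 (∑ y ∈ Z.part x, μ y)
          - Real.logb 2 (∑ y ∈ J.part x, μ y))
        ≤ ∑ x, μ x * ((∑ y ∈ X.part x, μ y) * (∑ y ∈ Y.part x, μ y) /
            ((∑ y ∈ Z.part x, μ y) * (∑ y ∈ J.part x, μ y)) - 1) / Real.log 2 :=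
          Finset.sum_le_sum fun x _ => hstep x
      _ = ((∑ x, μ x * ((∑ y ∈ X.part x, μ y) * (∑ y ∈ Y.part x, μ y) /
            ((∑ y ∈ Z.part x, μ y) * (∑ y ∈ J.part x, μ y)))) - 1) / Real.log 2 := by
          rw [← Finset.sum_div]
          congr 1
          have hd : ∑ x, μ x * ((∑ y ∈ X.part x, μ y) * (∑ y ∈ Y.part x, μ y) /
                ((∑ y ∈ Z.part x, μ y) * (∑ y ∈ J.part x, μ y)) - 1)
              = (∑ x, μ x * ((∑ y ∈ X.part x, μ y) * (∑ y ∈ Y.part x, μ y) /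
                ((∑ y ∈ Z.part x, μ y) * (∑ y ∈ J.part x, μ y)))) - ∑ x, μ x := by
            rw [← Finset.sum_sub_distrib]
            exact Finset.sum_congr rfl fun x _ => by ring
          rw [hd, h1]
      _ ≤ 0 := div_nonpos_of_nonpos_of_nonneg (by linarith [count])
          (Real.log_nonneg one_le_two)
  have expand : ∑ x, μ x * (Real.logb 2 (∑ y ∈ X.part x, μ y)
        + Real.logb 2 (∑ y ∈ Y.part x, μ y) - Real.logb 2 (∑ y ∈ Z.part x, μ y)
        - Real.logb 2 (∑ y ∈ J.part x, μ y))
      = (∑ x, μ x * Real.logb 2 (∑ y ∈ X.part x, μ y))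
        + (∑ x, μ x * Real.logb 2 (∑ y ∈ Y.part x, μ y))
        - (∑ x, μ x * Real.logb 2 (∑ y ∈ Z.part x, μ y))
        - (∑ x, μ x * Real.logb 2 (∑ y ∈ J.part x, μ y)) := by
    rw [← Finset.sum_add_distrib, ← Finset.sum_sub_distrib, ← Finset.sum_sub_distrib]
    exact Finset.sum_congr rfl fun x _ => by ring
  rw [expand] at sumlog
  rw [mutualInfo, ← hJdef, entropy_eq μ X, entropy_eq μ Y, entropy_eq μ Z, entropy_eq μ J]
  linarith
end

section
/- If two partitions X and Y of a finite set are incomparable in the refinement order, then there exist a probability distribution μ and a natural number n ≥ 1 with G_{n,μ}(X) < G_{n,μ}(Y), and also a distribution μ' and n' with G_{n',μ'}(Y) < G_{n',μ'}(X). -/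
open Finset

variable {σ : Type*} [Fintype σ] [DecidableEq σ]

lemma gGuess_nonneg (μ : σ → ℝ) (n : ℕ) (B : Finset σ) : 0 ≤ gGuess μ n B := by
  have h : (∅ : Finset σ) ∈ B.powerset.filter fun S => S.card ≤ n := by simp
  unfold gGuess
  exact le_trans (by simp) (Finset.le_sup' (fun S => ∑ x ∈ S, μ x) h)

lemma le_gGuess_one (μ : σ → ℝ) {a : σ} {B : Finset σ} (ha : a ∈ B) :
    μ a ≤ gGuess μ 1 B := by
  have h : ({a} : Finset σ) ∈ B.powerset.filter fun S => S.card ≤ 1 := by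
    simp [Finset.singleton_subset_iff, ha]
  unfold gGuess
  exact le_trans (by simp) (Finset.le_sup' (fun S => ∑ x ∈ S, μ x) h)

lemma gGuess_one_le (μ : σ → ℝ) {c : ℝ} {B : Finset σ} (hc : 0 ≤ c)
    (h : ∀ x ∈ B, μ x ≤ c) : gGuess μ 1 B ≤ c := by
  apply Finset.sup'_le
  intro S hS
  simp only [Finset.mem_filter, Finset.mem_powerset] at hS
  rcases S.eq_empty_or_nonempty with rfl | hne
  · simpa using hc
  · have hcard : S.card = 1 := le_antisymm hS.2 (Finset.card_pos.mpr hne)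
    obtain ⟨x, rfl⟩ := Finset.card_eq_one.mp hcard
    simpa using h x (hS.1 (by simp))

lemma key_guess (X Y : Finpartition (univ : Finset σ)) (h : ¬ Refines X Y) :
    ∃ (μ : σ → ℝ) (n : ℕ), IsDist μ ∧ 1 ≤ n ∧ GGuess μ n Y < GGuess μ n X := by
  unfold Refines at h
  push_neg at h
  obtain ⟨B, hB, hBsub⟩ := h
  obtain ⟨a, ha⟩ := Y.nonempty_of_mem_parts hB
  obtain ⟨Ca, hCa, haCa⟩ := X.exists_mem (mem_univ a)
  have hnot : ¬ B ⊆ Ca := hBsub Ca hCa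
  obtain ⟨b, hb, hbCa⟩ := Finset.not_subset.mp hnot
  obtain ⟨Cb, hCb, hbCb⟩ := X.exists_mem (mem_univ b)
  have hab : a ≠ b := fun hEq => hbCa (hEq ▸ haCa)
  have hCaCb : Ca ≠ Cb := fun hEq => hbCa (hEq ▸ hbCb)
  set μ : σ → ℝ := fun x => if x = a ∨ x = b then (1:ℝ)/2 else 0 with hμ
  have hμnn : ∀ x, 0 ≤ μ x := by
    intro x; simp only [hμ]; split <;> norm_num
  have hμeq : ∀ x, μ x = (if x = a then (1:ℝ)/2 else 0) + (if x = b then (1:ℝ)/2 else 0) := by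
    intro x
    by_cases h1 : x = a <;> by_cases h2 : x = b <;>
      simp_all [hμ] <;> simp_all
  have hdist : IsDist μ := by
    refine ⟨hμnn, ?_⟩
    rw [Finset.sum_congr rfl fun x _ => hμeq x, Finset.sum_add_distrib]
    simp
    norm_num
  have hμle : ∀ x, μ x ≤ 1/2 := by
    intro x; simp only [hμ]; split <;> norm_num
  have hμzero : ∀ x, x ≠ a → x ≠ b → μ x = 0 := by
    intro x h1 h2; simp [hμ, h1, h2]
  refine ⟨μ, 1, hdist, le_refl 1, ?_⟩
  have hY : GGuess μ 1 Y ≤ 1/2 := by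
    have hle : ∀ C ∈ Y.parts, gGuess μ 1 C ≤ if C = B then (1:ℝ)/2 else 0 := by
      intro C hC
      by_cases hCB : C = B
      · simp only [hCB, if_pos rfl]
        exact gGuess_one_le μ (by norm_num) fun x _ => hμle x
      · simp only [if_neg hCB]
        apply gGuess_one_le μ le_rfl
        intro x hx
        have hxa : x ≠ a := fun hx' => hCB (Y.eq_of_mem_parts hC hB (hx' ▸ hx) ha)
        have hxb : x ≠ b := fun hx' => hCB (Y.eq_of_mem_parts hC hB (hx' ▸ hx) hb)
        exact le_of_eq (hμzero x hxa hxb)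
    calc GGuess μ 1 Y ≤ ∑ C ∈ Y.parts, if C = B then (1:ℝ)/2 else 0 :=
          Finset.sum_le_sum hle
      _ = 1/2 := by rw [Finset.sum_ite_eq' Y.parts B (fun _ => (1:ℝ)/2), if_pos hB]
  have hX : 1 ≤ GGuess μ 1 X := by
    have hsub : ({Ca, Cb} : Finset (Finset σ)) ⊆ X.parts := by
      intro C hC
      rcases Finset.mem_insert.mp hC with rfl | hC
      · exact hCa
      · exact Finset.mem_singleton.mp hC ▸ hCb
    have h1 : ∑ C ∈ ({Ca, Cb} : Finset (Finset σ)), gGuess μ 1 C ≤ GGuess μ 1 X :=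
      Finset.sum_le_sum_of_subset_of_nonneg hsub fun C _ _ => gGuess_nonneg μ 1 C
    have h2 : ∑ C ∈ ({Ca, Cb} : Finset (Finset σ)), gGuess μ 1 C = gGuess μ 1 Ca + gGuess μ 1 Cb :=
      Finset.sum_pair hCaCb
    have h3 : (1:ℝ)/2 ≤ gGuess μ 1 Ca := by
      have := le_gGuess_one μ haCa
      simpa [hμ] using this
    have h4 : (1:ℝ)/2 ≤ gGuess μ 1 Cb := by
      have := le_gGuess_one μ hbCb
      simpa [hμ] using this
    linarith
  linarith

theorem incomparable_guess_prob_both_ways (X Y : Finpartition (univ : Finset σ))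
    (hXY : ¬ Refines X Y) (hYX : ¬ Refines Y X) :
    (∃ (μ : σ → ℝ) (n : ℕ), IsDist μ ∧ 1 ≤ n ∧ GGuess μ n X < GGuess μ n Y) ∧
    (∃ (μ' : σ → ℝ) (n' : ℕ), IsDist μ' ∧ 1 ≤ n' ∧ GGuess μ' n' Y < GGuess μ' n' X) := by
  exact ⟨key_guess Y X hYX, key_guess X Y hXY⟩
end

section
/- For partitions (deterministic programs) P and P' of a finite set, P ⊑ P' in the refinement order if and only if for every distribution μ the min-entropy leakage satisfies ME_μ(P) ≤ ME_μ(P'). -/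
open Finset

variable {σ : Type*} [Fintype σ] [DecidableEq σ]

lemma le_fmax (μ : σ → ℝ) {x : σ} {B : Finset σ} (hx : x ∈ B) : μ x ≤ fmax μ B := by
  have hmem : μ x ∈ B.image μ := Finset.mem_image_of_mem μ hx
  obtain ⟨m, hm⟩ := Finset.max_of_mem hmem
  have := Finset.le_max hmem
  rw [hm] at this
  rw [fmax, hm]
  exact_mod_cast this

lemma exists_fmax (μ : σ → ℝ) {B : Finset σ} (hB : B.Nonempty) :
    ∃ x ∈ B, fmax μ B = μ x := by
  obtain ⟨m, hm⟩ := Finset.max_of_nonempty (hB.image μ)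
  have hmem := Finset.mem_of_max hm
  obtain ⟨x, hx, hxm⟩ := Finset.mem_image.1 hmem
  exact ⟨x, hx, by rw [fmax, hm, ← hxm]; rfl⟩

lemma fmax_le (μ : σ → ℝ) {c : ℝ} {B : Finset σ} (hc : 0 ≤ c)
    (h : ∀ x ∈ B, μ x ≤ c) : fmax μ B ≤ c := by
  rcases B.eq_empty_or_nonempty with rfl | hB
  · simp [fmax]; exact hc
  · obtain ⟨x, hx, hfx⟩ := exists_fmax μ hB
    rw [hfx]; exact h x hx

lemma fmax_nonneg (μ : σ → ℝ) (hnn : ∀ x, 0 ≤ μ x) (B : Finset σ) : 0 ≤ fmax μ B := by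
  rcases B.eq_empty_or_nonempty with rfl | hB
  · simp [fmax]
  · obtain ⟨x, hx, hfx⟩ := exists_fmax μ hB
    rw [hfx]; exact hnn x

lemma sum_fmax_mono (P P' : Finpartition (univ : Finset σ)) (h : Refines P P')
    (μ : σ → ℝ) (hnn : ∀ x, 0 ≤ μ x) :
    ∑ C ∈ P.parts, fmax μ C ≤ ∑ B ∈ P'.parts, fmax μ B := by
  have key : ∀ C ∈ P.parts, ∃ B ∈ P'.parts, B ⊆ C ∧ fmax μ C ≤ fmax μ B := by
    intro C hC
    obtain ⟨x, hxC, hfx⟩ := exists_fmax μ (P.nonempty_of_mem_parts hC)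
    obtain ⟨B, hB, hxB⟩ := P'.exists_mem (mem_univ x)
    obtain ⟨C', hC', hBC'⟩ := h B hB
    have : C' = C := P.eq_of_mem_parts hC' hC (hBC' hxB) hxC
    subst this
    exact ⟨B, hB, hBC', hfx ▸ le_fmax μ hxB⟩
  choose f hf1 hf2 hf3 using key
  have hinj : ∀ C₁ (h₁ : C₁ ∈ P.parts) C₂ (h₂ : C₂ ∈ P.parts),
      f C₁ h₁ = f C₂ h₂ → C₁ = C₂ := by
    intro C₁ h₁ C₂ h₂ hfe
    obtain ⟨z, hz⟩ := P'.nonempty_of_mem_parts (hf1 C₁ h₁)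
    have hz₁ : z ∈ C₁ := hf2 C₁ h₁ hz
    have hz₂ : z ∈ C₂ := hf2 C₂ h₂ (hfe ▸ hz)
    exact P.eq_of_mem_parts h₁ h₂ hz₁ hz₂
  calc ∑ C ∈ P.parts, fmax μ C
      ≤ ∑ C ∈ P.parts.attach, fmax μ (f C.1 C.2) := by
        rw [Finset.sum_attach P.parts (fun C => fmax μ C) |>.symm]
        exact Finset.sum_le_sum fun C _ => hf3 C.1 C.2
    _ = ∑ B ∈ P.parts.attach.image (fun C => f C.1 C.2), fmax μ B := by
        rw [Finset.sum_image]
        intro C₁ _ C₂ _ hfe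
        exact Subtype.ext (hinj C₁.1 C₁.2 C₂.1 C₂.2 hfe)
    _ ≤ ∑ B ∈ P'.parts, fmax μ B := by
        apply Finset.sum_le_sum_of_subset_of_nonneg
        · intro B hB
          obtain ⟨C, _, rfl⟩ := Finset.mem_image.1 hB
          exact hf1 C.1 C.2
        · exact fun B _ _ => fmax_nonneg μ hnn B

lemma sum_fmax_pos (X : Finpartition (univ : Finset σ)) {μ : σ → ℝ} (hμ : IsDist μ) :
    0 < ∑ B ∈ X.parts, fmax μ B := by
  obtain ⟨hnn, hs⟩ := hμ
  have : ∃ x : σ, 0 < μ x := by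
    by_contra hcon
    push_neg at hcon
    have : ∑ x : σ, μ x = 0 :=
      Finset.sum_eq_zero fun x _ => le_antisymm (hcon x) (hnn x)
    rw [hs] at this; norm_num at this
  obtain ⟨x, hx⟩ := this
  obtain ⟨B, hB, hxB⟩ := X.exists_mem (mem_univ x)
  have h1 : 0 < fmax μ B := lt_of_lt_of_le hx (le_fmax μ hxB)
  calc (0:ℝ) < fmax μ B := h1
    _ ≤ _ := Finset.single_le_sum (fun C _ => fmax_nonneg μ hnn C) hB

theorem refines_iff_forall_MEleak_le (P P' : Finpartition (univ : Finset σ)) :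
    Refines P P' ↔ ∀ μ : σ → ℝ, IsDist μ → MEleak μ P ≤ MEleak μ P' := by
  constructor
  · intro h μ hμ
    unfold MEleak
    apply sub_le_sub_right
    exact Real.logb_le_logb_of_le one_lt_two (sum_fmax_pos P hμ)
      (sum_fmax_mono P P' h μ hμ.1)
  · intro h B hB
    by_contra hcon
    push_neg at hcon
    obtain ⟨x, hxB⟩ := P'.nonempty_of_mem_parts hB
    obtain ⟨C, hC, hxC⟩ := P.exists_mem (mem_univ x)
    obtain ⟨y, hyB, hyC⟩ := Finset.not_subset.1 (hcon C hC)
    have hxy : x ≠ y := fun he => hyC (he ▸ hxC)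
    set μ : σ → ℝ := fun z => (if z = x then (1:ℝ)/2 else 0) + (if z = y then (1:ℝ)/2 else 0)
      with hμdef
    have hnn : ∀ z, 0 ≤ μ z := by
      intro z; dsimp [μ]; split <;> split <;> norm_num
    have hdist : IsDist μ := by
      refine ⟨hnn, ?_⟩
      simp only [hμdef, Finset.sum_add_distrib, Finset.sum_ite_eq' univ, mem_univ, if_true]
      norm_num
    have hμx : μ x = 1/2 := by simp [hμdef, hxy]
    have hμy : μ y = 1/2 := by simp [hμdef, hxy.symm]
    have hle : ∀ z, μ z ≤ 1/2 := by
      intro z; dsimp [μ]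
      rcases eq_or_ne z x with rfl | hzx
      · simp [hxy]
      · rcases eq_or_ne z y with rfl | hzy
        · simp [hzx]
        · simp [hzx, hzy]
    have hzero : ∀ z, z ≠ x → z ≠ y → μ z = 0 := by
      intro z h1 h2; simp [hμdef, h1, h2]
    -- fmax over univ is 1/2
    have huniv : fmax μ (univ : Finset σ) = 1/2 := by
      refine le_antisymm (fmax_le μ (by norm_num) fun z _ => hle z) ?_
      rw [← hμx]; exact le_fmax μ (mem_univ x)
    -- sum over P'.parts is 1/2
    have hsum' : ∑ B' ∈ P'.parts, fmax μ B' = 1/2 := by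
      rw [Finset.sum_eq_single_of_mem B hB]
      · refine le_antisymm (fmax_le μ (by norm_num) fun z _ => hle z) ?_
        rw [← hμx]; exact le_fmax μ hxB
      · intro B' hB' hne
        have hdisj : Disjoint B' B := P'.disjoint hB' hB hne
        refine le_antisymm (fmax_le μ le_rfl ?_) (fmax_nonneg μ hnn B')
        intro z hz
        refine le_of_eq (hzero z ?_ ?_)
        · rintro rfl; exact (Finset.disjoint_left.1 hdisj hz) hxB
        · rintro rfl; exact (Finset.disjoint_left.1 hdisj hz) hyB
    -- sum over P.parts is at least 1
    obtain ⟨C', hC', hyC'⟩ := P.exists_mem (mem_univ y)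
    have hCC' : C ≠ C' := fun he => hyC (he ▸ hyC')
    have hsum : (1:ℝ) ≤ ∑ C₀ ∈ P.parts, fmax μ C₀ := by
      have hpair : ({C, C'} : Finset (Finset σ)) ⊆ P.parts := by
        intro D hD
        rcases Finset.mem_insert.1 hD with rfl | hD
        · exact hC
        · exact Finset.mem_singleton.1 hD ▸ hC'
      calc (1:ℝ) = 1/2 + 1/2 := by norm_num
        _ ≤ fmax μ C + fmax μ C' := by
            gcongr
            · rw [← hμx]; exact le_fmax μ hxC
            · rw [← hμy]; exact le_fmax μ hyC'
        _ = ∑ D ∈ ({C, C'} : Finset (Finset σ)), fmax μ D := (Finset.sum_pair hCC').symm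
        _ ≤ _ := Finset.sum_le_sum_of_subset_of_nonneg hpair
            fun D _ _ => fmax_nonneg μ hnn D
    have hME := h μ hdist
    unfold MEleak at hME
    rw [hsum', huniv] at hME
    simp only [sub_self] at hME
    have : (0:ℝ) < Real.logb 2 (∑ C₀ ∈ P.parts, fmax μ C₀) - Real.logb 2 (1/2) := by
      have h1 : (0:ℝ) ≤ Real.logb 2 (∑ C₀ ∈ P.parts, fmax μ C₀) := by
        rw [← Real.logb_one]
        exact Real.logb_le_logb_of_le one_lt_two one_pos hsum
      have h2 : Real.logb 2 ((1:ℝ)/2) < 0 := by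
        rw [show (1:ℝ)/2 = 2⁻¹ by norm_num, Real.logb_inv, Real.logb_self_eq_one] <;> norm_num
      linarith
    linarith
end
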